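/- arXiv:2006.12916 — 2 statements merged into one kernel-verified Lean document; each statement's English description precedes it below -/
import Mathlib

section
/- If a rooted graph (X,E) is (m,k)-departing, then every horizontal geodesic in (X,E) has length at most L(m,k) := ⌈(2m+1)/k⌉·k + 2m. In particular, in an (m,1)-departing graph every horizontal geodesic has length at most 4m+1. -/
open SimpleGraph Metric
open scoped ENNReal ENat

noncomputable section

/-- A locally finite connected graph with a distinguished root. -/
structure RootedGraph (X : Type*) where
  G : SimpleGraph X
  root : X
  conn : G.Connected
  locFin : ∀ x : X, {y | G.Adj x y}.Finite

namespace RootedGraph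

variable {X : Type*} (R : RootedGraph X)

/-- The level `|x| = d(ϑ,x)` of a vertex. -/
def level (x : X) : ℕ := R.G.dist R.root x

/-- The horizontal subgraph: edges joining vertices of equal level. -/
def Gh : SimpleGraph X where
  Adj x y := R.G.Adj x y ∧ R.level x = R.level y
  symm := ⟨fun _ _ h => ⟨h.1.symm, h.2.symm⟩⟩
  loopless := ⟨fun x h => R.G.loopless.irrefl x h.1⟩

/-- The horizontal distance `d_h`, valued in `ℕ∞`. -/
def dh (x y : X) : ℕ∞ := R.Gh.edist x y

/-- The `m`-th descendant set `J_m(x)`: vertices `y` with `|y| = |x| + m` lying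
below `x` (i.e. `x` lies on a geodesic from the root to `y`). -/
def J (m : ℕ) (x : X) : Set X :=
  {y | R.level y = R.level x + m ∧ R.G.dist x y = m}

/-- `(m,k)`-departing property. -/
def Departing (m k : ℕ) : Prop :=
  ∀ x y : X, R.level x = R.level y → (k : ℕ∞) < R.dh x y →
    ∀ u ∈ R.J m x, ∀ v ∈ R.J m y, ((2 * k : ℕ) : ℕ∞) < R.dh u v

/-- Expansive property. -/
def Expansive : Prop :=
  ∀ x y : X, R.level x = R.level y → (1 : ℕ∞) < R.dh x y →
    ∀ u ∈ R.J 1 x, ∀ v ∈ R.J 1 y, (1 : ℕ∞) < R.dh u v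

/-- The Gromov product `(x|y)` with base point the root. -/
def gp (x y : X) : ℝ := ((R.level x : ℝ) + R.level y - R.G.dist x y) / 2

/-- Gromov hyperbolicity with respect to the root base point. -/
def Hyperbolic : Prop :=
  ∃ δ : ℝ, 0 ≤ δ ∧ ∀ x y z : X, min (R.gp x z) (R.gp z y) - δ ≤ R.gp x y

/-- A geodesic ray from the root. -/
def IsRay (f : ℕ → X) : Prop := f 0 = R.root ∧ ∀ i, f (i + 1) ∈ R.J 1 (f i)

/-- The Gromov product of two rays: the (increasing) limit of `(x_i|y_i)`. -/
def gpRay (f g : ℕ → X) : ℝ≥0∞ := ⨆ i, ENNReal.ofReal (R.gp (f i) (g i))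

/-- `|x ∨ y|_k = sup{ i : d_h(x_i,y_i) ≤ k }`. -/
def joinK (k : ℕ) (f g : ℕ → X) : ℝ≥0∞ :=
  ⨆ (i : ℕ) (_ : R.dh (f i) (g i) ≤ (k : ℕ∞)), (i : ℝ≥0∞)

/-- The Gromov product on a model `B` of the hyperbolic boundary, defined as the
supremum over pairs of converging rays. -/
def gpB {B : Type*} (lim : (ℕ → X) → B) (ξ η : B) : ℝ≥0∞ :=
  ⨆ (f : ℕ → X) (g : ℕ → X)
    (_ : R.IsRay f ∧ R.IsRay g ∧ lim f = ξ ∧ lim g = η), R.gpRay f g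

/-- `B` together with `lim` is a model of the hyperbolic boundary: every point is the
limit of a ray, and two rays have the same limit iff they are equivalent. -/
def BoundaryOf {B : Type*} (lim : (ℕ → X) → B) : Prop :=
  (∀ ξ : B, ∃ f, R.IsRay f ∧ lim f = ξ) ∧
    ∀ f g, R.IsRay f → R.IsRay g → (lim f = lim g ↔ R.gpRay f g = ⊤)

/-- The metric on the boundary model is a Gromov metric:
`θ_a(ξ,η) ≍ e^{-a(ξ|η)}`. -/
def GromovLike {B : Type*} [MetricSpace B] (lim : (ℕ → X) → B) (a c₁ c₂ : ℝ) : Prop :=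
  ∀ ξ η : B, ξ ≠ η →
    c₁ * Real.exp (-a * (R.gpB lim ξ η).toReal) ≤ dist ξ η ∧
      dist ξ η ≤ c₂ * Real.exp (-a * (R.gpB lim ξ η).toReal)

/-- The boundary cell `J_∂(x)`: boundary points reachable by rays through `x`. -/
def cell {B : Type*} (lim : (ℕ → X) → B) (x : X) : Set B :=
  {ξ | ∃ f, R.IsRay f ∧ f (R.level x) = x ∧ lim f = ξ}

/-- The `k`-shadow `J^k_∂(x)`. -/
def shadow {B : Type*} (lim : (ℕ → X) → B) (k : ℕ) (x : X) : Set B :=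
  ⋃ y ∈ {y | R.level y = R.level x ∧ R.dh x y ≤ (k : ℕ∞)}, R.cell lim y

/-- Bounded degree. -/
def BddDeg : Prop := ∃ D : ℕ, ∀ x : X, Set.ncard {y | R.G.Adj x y} ≤ D

/-- A vertical rooted graph: all edges join adjacent levels. -/
def Vertical : Prop :=
  ∀ x y : X, R.G.Adj x y → R.level x = R.level y + 1 ∨ R.level y = R.level x + 1

/-- An index map on `(X,E_v)` over `M`. -/
def IsIndexMap {M : Type*} [MetricSpace M] (Φ : X → Set M) : Prop :=
  (∀ x, IsCompact (Φ x)) ∧ (∀ x, (Φ x).Nonempty) ∧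
    (∀ x y, y ∈ R.J 1 x → Φ y ⊆ Φ x) ∧
    (∀ f, R.IsRay f → ∃ p, (⋂ i, Φ (f i)) = {p})

/-- The attractor of an index map. -/
def attractor {M : Type*} [MetricSpace M] (Φ : X → Set M) : Set M :=
  ⋂ n : ℕ, ⋃ x ∈ {x | R.level x = n}, Φ x

/-- Exponential type-(b): `diam Φ(x) ≤ δ₀ e^{-b|x|}`. -/
def ExpType {M : Type*} [MetricSpace M] (Φ : X → Set M) (b δ₀ : ℝ) : Prop :=
  ∀ x, EMetric.diam (Φ x) ≤ ENNReal.ofReal (δ₀ * Real.exp (-b * R.level x))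

/-- Condition `(S_b)`. -/
def CondS {M : Type*} [MetricSpace M] (Φ : X → Set M) (b : ℝ) : Prop :=
  ∀ c : ℝ, 0 < c → ∃ ℓ : ℕ, ∀ (n : ℕ) (F : Set M),
    EMetric.diam F < ENNReal.ofReal (c * Real.exp (-b * n)) →
      Set.ncard {x | R.level x = n ∧ ((Φ x ∩ R.attractor Φ) ∩ F).Nonempty} ≤ ℓ

end RootedGraph

/-- Distance between two subsets of a metric space. -/
def setDist {M : Type*} [MetricSpace M] (s t : Set M) : ℝ :=
  sInf ((fun p : M × M => dist p.1 p.2) '' s ×ˢ t)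

/-- The AI_b-graph on `X` associated to an index map `Φ`:
same root, same vertical edges, and horizontal edges between distinct equal-level
vertices whose index sets are `γe^{-bn}`-close. -/
def RootedGraph.IsAIb {X M : Type*} [MetricSpace M] (R R' : RootedGraph X)
    (Φ : X → Set M) (b γ : ℝ) : Prop :=
  R'.root = R.root ∧ ∀ x y : X, R'.G.Adj x y ↔
    (R.G.Adj x y ∨ (R.level x = R.level y ∧ x ≠ y ∧
      setDist (Φ x) (Φ y) ≤ γ * Real.exp (-b * R.level x)))

/-- The AI_∞-graph on `X` associated to an index map `Φ`. -/
def RootedGraph.IsAIinf {X M : Type*} [MetricSpace M] (R R' : RootedGraph X)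
    (Φ : X → Set M) : Prop :=
  R'.root = R.root ∧ ∀ x y : X, R'.G.Adj x y ↔
    (R.G.Adj x y ∨ (R.level x = R.level y ∧ x ≠ y ∧ (Φ x ∩ Φ y).Nonempty))

end


section AuxHorizontal

variable {X : Type*}

/-- Chain bound for `edist` along a sequence of consecutively adjacent vertices. -/
lemma edist_chain_le {G : SimpleGraph X} (f : ℕ → X) (a : ℕ) :
    ∀ b, a ≤ b → (∀ i, i < b → G.Adj (f i) (f (i + 1))) →
      G.edist (f a) (f b) ≤ ((b - a : ℕ) : ℕ∞) := by
  intro b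
  induction b with
  | zero =>
    intro hab _
    obtain rfl : a = 0 := Nat.le_zero.mp hab
    simp [SimpleGraph.edist_self]
  | succ b ih =>
    intro hab hadj
    rcases Nat.lt_or_ge a (b + 1) with hlt | hge
    · have ha : a ≤ b := Nat.lt_succ_iff.mp hlt
      have h1 : G.edist (f b) (f (b + 1)) = 1 :=
        SimpleGraph.edist_eq_one_iff_adj.mpr (hadj b (Nat.lt_succ_self b))
      have h2 := ih ha (fun i hi => hadj i (hi.trans (Nat.lt_succ_self b)))
      have h3 : (b + 1 - a : ℕ) = (b - a) + 1 := by omega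
      calc G.edist (f a) (f (b + 1)) ≤ G.edist (f a) (f b) + G.edist (f b) (f (b + 1)) :=
            SimpleGraph.edist_triangle
        _ ≤ ((b - a : ℕ) : ℕ∞) + 1 := by rw [h1]; exact add_le_add_left h2 1
        _ = ((b + 1 - a : ℕ) : ℕ∞) := by rw [h3]; push_cast; ring
    · obtain rfl : a = b + 1 := le_antisymm hab hge
      simp [SimpleGraph.edist_self]

lemma RootedGraph.dh_def (R : RootedGraph X) (x y : X) : R.dh x y = R.Gh.edist x y := rfl

lemma RootedGraph.Gh_adj (R : RootedGraph X) {a b : X} :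
    R.Gh.Adj a b ↔ R.G.Adj a b ∧ R.level a = R.level b := Iff.rfl

lemma RootedGraph.Gh_le (R : RootedGraph X) : R.Gh ≤ R.G :=
  fun _ _ hab => (R.Gh_adj.mp hab).1

lemma RootedGraph.edist_eq_coe_dist (R : RootedGraph X) (a b : X) :
    R.G.edist a b = (R.G.dist a b : ℕ∞) :=
  (ENat.coe_toNat (SimpleGraph.edist_ne_top_iff_reachable.2 (R.conn a b))).symm

lemma RootedGraph.dist_le_of_edist_le (R : RootedGraph X) {a b : X} {c : ℕ}
    (hle : R.G.edist a b ≤ (c : ℕ∞)) : R.G.dist a b ≤ c := by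
  rw [← Nat.cast_le (α := ℕ∞), ← R.edist_eq_coe_dist]; exact hle

/-- Every vertex of level at least `m` has an ancestor `m` levels up. -/
lemma RootedGraph.exists_ancestor (R : RootedGraph X) (m : ℕ) (z : X)
    (hmz : m ≤ R.level z) :
    ∃ w, R.level w = R.level z - m ∧ z ∈ R.J m w := by
  obtain ⟨p, hp⟩ := R.conn.exists_walk_length_eq_dist R.root z
  have hlen : p.length = R.level z := hp
  set n := R.level z with hn
  have hadj : ∀ i, i < n → R.G.Adj (p.getVert i) (p.getVert (i + 1)) :=
    fun i hi => p.adj_getVert_succ (by omega)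
  have h1 : R.G.dist R.root (p.getVert (n - m)) ≤ n - m := by
    have h := edist_chain_le p.getVert 0 (n - m) (by omega) (fun i hi => hadj i (by omega))
    rw [p.getVert_zero] at h
    exact R.dist_le_of_edist_le (by simpa using h)
  have h2 : R.G.dist (p.getVert (n - m)) z ≤ m := by
    have h := edist_chain_le p.getVert (n - m) n (by omega) hadj
    rw [show p.getVert n = z from hlen ▸ p.getVert_length] at h
    refine R.dist_le_of_edist_le (le_trans h ?_)
    exact Nat.cast_le.mpr (by omega)
  have htri : n ≤ R.G.dist R.root (p.getVert (n - m)) + R.G.dist (p.getVert (n - m)) z := by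
    have h : R.G.dist R.root z ≤
        R.G.dist R.root (p.getVert (n - m)) + R.G.dist (p.getVert (n - m)) z :=
      R.conn.dist_triangle
    exact h
  have hlw : R.level (p.getVert (n - m)) = n - m := by
    have : R.G.dist R.root (p.getVert (n - m)) = n - m := by omega
    exact this
  refine ⟨p.getVert (n - m), hlw, ?_, ?_⟩
  · show R.level z = R.level (p.getVert (n - m)) + m
    rw [hlw]; omega
  · show R.G.dist (p.getVert (n - m)) z = m
    omega

/-- The level is constant along a horizontal walk. -/
lemma RootedGraph.level_getVert (R : RootedGraph X) {x y : X} (p : R.Gh.Walk x y) :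
    ∀ i, i ≤ p.length → R.level (p.getVert i) = R.level x := by
  intro i
  induction i with
  | zero => intro _; rw [p.getVert_zero]
  | succ i ih =>
    intro hi
    have h1 := R.Gh_adj.mp (p.adj_getVert_succ (i := i) (by omega))
    rw [← h1.2]
    exact ih (by omega)

/-- Main bound: horizontal geodesics in an `(m,k)`-departing graph have length
at most `((2m+k)/k)·k + 2m`. -/
lemma RootedGraph.main_bound (R : RootedGraph X) (m k : ℕ) (hm : 0 < m) (hk : 0 < k)
    (h : R.Departing m k) (x y : X) (hxy : R.dh x y = (R.G.dist x y : ℕ∞)) :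
    R.dh x y ≤ ((((2 * m + k) / k) * k + 2 * m : ℕ) : ℕ∞) := by
  set q := (2 * m + k) / k with hq
  have hqk : 2 * m + 1 ≤ q * k := by
    have h1 : k * q + (2 * m + k) % k = 2 * m + k := by
      rw [hq]; exact Nat.div_add_mod _ _
    have h2 : (2 * m + k) % k < k := Nat.mod_lt _ hk
    have h3 : q * k = k * q := Nat.mul_comm _ _
    omega
  rw [hxy]
  by_contra hc
  push_neg at hc
  rw [Nat.cast_lt] at hc
  set d := R.G.dist x y with hd
  obtain ⟨p, hplen⟩ : ∃ p : R.Gh.Walk x y, p.length = d :=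
    SimpleGraph.exists_walk_of_edist_eq_coe hxy
  set n := R.level x with hn
  have hlev : ∀ i, i ≤ p.length → R.level (p.getVert i) = n := R.level_getVert p
  have hGadj : ∀ i, i < p.length → R.G.Adj (p.getVert i) (p.getVert (i + 1)) :=
    fun i hi => (R.Gh_adj.mp (p.adj_getVert_succ hi)).1
  rcases Nat.lt_or_ge n m with hnm | hnm
  · -- small-level case: `d ≤ 2n < 2m`, contradicting `d > qk + 2m`.
    have hy : R.G.dist R.root y = n := by
      have h1 := hlev p.length le_rfl
      rw [p.getVert_length] at h1
      exact h1
    have htri : d ≤ R.G.dist x R.root + R.G.dist R.root y := R.conn.dist_triangle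
    have hxr : R.G.dist x R.root = n := by
      rw [SimpleGraph.dist_comm]; rfl
    omega
  · set L' := q * k + 2 * m + 1 with hL'
    have hL'd : L' ≤ d := by omega
    have hL'p : L' ≤ p.length := by omega
    set t : ℕ → ℕ := fun j => min (2 * k * j) L' with ht
    have htle : ∀ j, t j ≤ L' := fun j => min_le_right _ _
    have htq : t q = L' := by
      have h1 : 2 * k * q = 2 * (q * k) := by ring
      simp only [ht]; omega
    have ht0 : t 0 = 0 := by simp [ht]
    have htmono : ∀ j, t j ≤ t (j + 1) := by
      intro j; simp only [ht]
      have h1 : 2 * k * (j + 1) = 2 * k * j + 2 * k := by ring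
      omega
    have htgap : ∀ j, t (j + 1) - t j ≤ 2 * k := by
      intro j; simp only [ht]
      have h1 : 2 * k * (j + 1) = 2 * k * j + 2 * k := by ring
      omega
    have hanc : ∀ j : ℕ, ∃ w, R.level w = n - m ∧ p.getVert (t j) ∈ R.J m w := by
      intro j
      have hlj : R.level (p.getVert (t j)) = n := hlev _ (le_trans (htle j) hL'p)
      obtain ⟨w, hw1, hw2⟩ := R.exists_ancestor m (p.getVert (t j)) (by omega)
      exact ⟨w, by rw [hw1, hlj], hw2⟩
    choose w hwlev hwJ using hanc
    have hchain : ∀ j, R.dh (w j) (w (j + 1)) ≤ (k : ℕ∞) := by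
      intro j
      by_contra hcc
      push_neg at hcc
      have h2k := h (w j) (w (j + 1)) (by rw [hwlev j, hwlev (j + 1)]) hcc
        _ (hwJ j) _ (hwJ (j + 1))
      have hle : R.dh (p.getVert (t j)) (p.getVert (t (j + 1))) ≤
          ((t (j + 1) - t j : ℕ) : ℕ∞) := by
        rw [R.dh_def]
        exact edist_chain_le p.getVert (t j) (t (j + 1)) (htmono j)
          (fun i hi => p.adj_getVert_succ (by have h1 := htle (j + 1); omega))
      have hle2 : R.dh (p.getVert (t j)) (p.getVert (t (j + 1))) ≤ ((2 * k : ℕ) : ℕ∞) :=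
        le_trans hle (Nat.cast_le.mpr (htgap j))
      exact h2k.not_ge hle2
    have hw0q : ∀ j, R.dh (w 0) (w j) ≤ ((j * k : ℕ) : ℕ∞) := by
      intro j
      induction j with
      | zero => rw [R.dh_def]; simp [SimpleGraph.edist_self]
      | succ j ih =>
        calc R.dh (w 0) (w (j + 1)) ≤ R.dh (w 0) (w j) + R.dh (w j) (w (j + 1)) := by
              rw [R.dh_def, R.dh_def, R.dh_def]; exact SimpleGraph.edist_triangle
          _ ≤ ((j * k : ℕ) : ℕ∞) + (k : ℕ∞) := add_le_add ih (hchain j)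
          _ = (((j + 1) * k : ℕ) : ℕ∞) := by push_cast; ring
    have hsegy : R.G.dist (p.getVert L') y ≤ p.length - L' := by
      have h1 := edist_chain_le p.getVert L' p.length hL'p hGadj
      rw [p.getVert_length] at h1
      exact R.dist_le_of_edist_le h1
    have hlow : L' ≤ R.G.dist (p.getVert 0) (p.getVert L') := by
      have htri : d ≤ R.G.dist x (p.getVert L') + R.G.dist (p.getVert L') y :=
        R.conn.dist_triangle
      rw [p.getVert_zero]
      omega
    have hup : R.G.edist (p.getVert 0) (p.getVert L') ≤ ((m + q * k + m : ℕ) : ℕ∞) := by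
      have e1 : R.G.edist (p.getVert 0) (w 0) ≤ (m : ℕ∞) := by
        rw [R.edist_eq_coe_dist, Nat.cast_le, SimpleGraph.dist_comm]
        have h1 := (hwJ 0).2
        rw [ht0] at h1
        omega
      have e3 : R.G.edist (w q) (p.getVert L') ≤ (m : ℕ∞) := by
        rw [R.edist_eq_coe_dist, Nat.cast_le]
        have h1 := (hwJ q).2
        rw [htq] at h1
        omega
      have e2 : R.G.edist (w 0) (w q) ≤ ((q * k : ℕ) : ℕ∞) :=
        le_trans (SimpleGraph.edist_anti R.Gh_le) (by rw [← R.dh_def]; exact hw0q q)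
      calc R.G.edist (p.getVert 0) (p.getVert L')
          ≤ R.G.edist (p.getVert 0) (w 0) + R.G.edist (w 0) (w q) +
              R.G.edist (w q) (p.getVert L') :=
            le_trans SimpleGraph.edist_triangle
              (add_le_add_left SimpleGraph.edist_triangle _)
        _ ≤ (m : ℕ∞) + ((q * k : ℕ) : ℕ∞) + (m : ℕ∞) := add_le_add (add_le_add e1 e2) e3
        _ = ((m + q * k + m : ℕ) : ℕ∞) := by push_cast; ring
    have hfin : R.G.dist (p.getVert 0) (p.getVert L') ≤ m + q * k + m :=
      R.dist_le_of_edist_le hup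
    omega

end AuxHorizontal

/-- Proposition 2.10: in an `(m,k)`-departing rooted graph all horizontal
geodesics have length at most `L(m,k) = ⌈(2m+1)/k⌉k + 2m`; in particular at most `4m+1`
when `k = 1`.  (Here `⌈(2m+1)/k⌉ = (2m+k)/k` in natural division.) -/
theorem horizontal_geodesic_bound {X : Type*} (R : RootedGraph X) (m k : ℕ)
    (hm : 0 < m) (hk : 0 < k) (h : R.Departing m k) :
    (∀ x y : X, R.dh x y = (R.G.dist x y : ℕ∞) →
      R.dh x y ≤ ((((2 * m + k) / k) * k + 2 * m : ℕ) : ℕ∞)) ∧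
    (k = 1 → ∀ x y : X, R.dh x y = (R.G.dist x y : ℕ∞) →
      R.dh x y ≤ ((4 * m + 1 : ℕ) : ℕ∞)) := by
  constructor
  · exact fun x y hxy => R.main_bound m k hm hk h x y hxy
  · intro hk1 x y hxy
    subst hk1
    have hb := R.main_bound m 1 hm hk h x y hxy
    rw [show (2 * m + 1) / 1 * 1 + 2 * m = 4 * m + 1 by omega] at hb
    exact hb
end

section
/- Let (X,E) be an expansive and (m,k)-departing rooted graph. Then there is a constant D_0 = D_0(m,k) > 0 such that for all geodesic rays x = [x_i], y = [y_i] from the root, |(x|y) − |x ∨ y|_k| ≤ D_0, where |x ∨ y|_k := sup{ i ≥ 0 : d_h(x_i,y_i) ≤ k } and (x|y) := lim_i (x_i|y_i). Consequently, two rays converge to the same boundary point if and only if d_h(x_i,y_i) ≤ k for all i ≥ 0. -/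
open SimpleGraph Metric
open scoped ENNReal ENat

/-! ### Auxiliary lemmas -/

section Aux

open SimpleGraph

namespace RootedGraph

variable {X : Type*} (R : RootedGraph X)

lemma level_root : R.level R.root = 0 := by simp [level]

lemma level_le_add_dist (x y : X) : R.level y ≤ R.level x + R.G.dist x y := by
  have := R.conn.dist_triangle (u := R.root) (v := x) (w := y)
  simpa [level] using this

lemma dist_adj_le_one {x y : X} (h : R.G.Adj x y) : R.G.dist x y ≤ 1 := by
  simpa using SimpleGraph.dist_le (SimpleGraph.Walk.cons h SimpleGraph.Walk.nil)

lemma level_adj_le {x y : X} (h : R.G.Adj x y) : R.level y ≤ R.level x + 1 :=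
  le_trans (R.level_le_add_dist x y) (by have := R.dist_adj_le_one h; omega)

lemma dist_start_getVert {u v : X} (W : R.G.Walk u v) :
    ∀ s : ℕ, R.G.dist u (W.getVert s) ≤ s := by
  induction W with
  | nil =>
    intro s
    rw [SimpleGraph.Walk.getVert_of_length_le _ (by simp)]
    simp [SimpleGraph.dist_self]
  | @cons a b c h W' ih =>
    intro s
    cases s with
    | zero => simp [SimpleGraph.dist_self]
    | succ s =>
      rw [SimpleGraph.Walk.getVert_cons_succ]
      calc R.G.dist a (W'.getVert s) ≤ R.G.dist a b + R.G.dist b (W'.getVert s) :=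
            R.conn.dist_triangle
        _ ≤ 1 + s := add_le_add (R.dist_adj_le_one h) (ih s)
        _ = s + 1 := by omega

lemma dist_getVert_end {u v : X} (W : R.G.Walk u v) :
    ∀ s : ℕ, R.G.dist (W.getVert s) v ≤ W.length - s := by
  induction W with
  | nil =>
    intro s
    rw [SimpleGraph.Walk.getVert_of_length_le _ (by simp)]
    simp
  | @cons a b c h W' ih =>
    intro s
    cases s with
    | zero =>
      simp only [SimpleGraph.Walk.getVert_zero, SimpleGraph.Walk.length_cons, Nat.sub_zero]
      calc R.G.dist a c ≤ R.G.dist a b + R.G.dist b c := R.conn.dist_triangle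
        _ ≤ 1 + W'.length := add_le_add (R.dist_adj_le_one h) (by simpa using ih 0)
        _ = W'.length + 1 := by omega
    | succ s =>
      rw [SimpleGraph.Walk.getVert_cons_succ]
      have := ih s
      have hl : (SimpleGraph.Walk.cons h W').length - (s+1) = W'.length - s := by
        simp [SimpleGraph.Walk.length_cons]
      omega

lemma exists_parent {w : X} (hw : 1 ≤ R.level w) : ∃ p, w ∈ R.J 1 p := by
  obtain ⟨W, hWl⟩ := R.conn.exists_walk_length_eq_dist R.root w
  have hWlen : W.length = R.level w := hWl
  have hlvl : R.level (W.getVert (R.level w - 1)) = R.G.dist R.root (W.getVert (R.level w - 1)) :=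
    rfl
  have h1 : R.G.dist R.root (W.getVert (R.level w - 1)) ≤ R.level w - 1 :=
    R.dist_start_getVert W (R.level w - 1)
  have h2 : R.G.dist (W.getVert (R.level w - 1)) w ≤ 1 := by
    have := R.dist_getVert_end W (R.level w - 1)
    omega
  have h3 : R.level w ≤ R.level (W.getVert (R.level w - 1)) + R.G.dist (W.getVert (R.level w - 1)) w :=
    R.level_le_add_dist _ w
  exact ⟨W.getVert (R.level w - 1), by constructor <;> omega⟩

/-- `Anc j x w` : `w` is reachable from `x` by a chain of `j` parent-child steps. -/
inductive Anc (R : RootedGraph X) : ℕ → X → X → Prop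
  | refl (x : X) : Anc R 0 x x
  | step {j : ℕ} {x p w : X} : Anc R j x p → w ∈ R.J 1 p → Anc R (j+1) x w

lemma anc_level : ∀ {j : ℕ} {x w : X}, R.Anc j x w → R.level w = R.level x + j := by
  intro j x w h
  induction h with
  | refl => simp
  | step hanc hJ ih => have := hJ.1; omega

lemma anc_dist_le : ∀ {j : ℕ} {x w : X}, R.Anc j x w → R.G.dist x w ≤ j := by
  intro j x w h
  induction h with
  | refl => simp
  | @step j x p w hanc hJ ih =>
    have htri := R.conn.dist_triangle (u := x) (v := p) (w := w)
    have := hJ.2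
    omega

lemma anc_mem_J {j : ℕ} {x w : X} (h : R.Anc j x w) : w ∈ R.J j x := by
  have hl := R.anc_level h
  have hd := R.anc_dist_le h
  have := R.level_le_add_dist x w
  exact ⟨hl, by omega⟩

lemma exists_anc : ∀ (j : ℕ) {w : X}, j ≤ R.level w → ∃ x, R.Anc j x w := by
  intro j
  induction j with
  | zero => exact fun _ => ⟨_, Anc.refl _⟩
  | succ j ih =>
    intro w hw
    obtain ⟨p, hp⟩ := R.exists_parent (w := w) (by omega)
    have hlp : j ≤ R.level p := by have := hp.1; omega
    obtain ⟨x, hx⟩ := ih hlp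
    exact ⟨x, hx.step hp⟩

end RootedGraph

end Aux
section Aux2

open SimpleGraph

namespace RootedGraph

variable {X : Type*} (R : RootedGraph X)

lemma gh_le : R.Gh ≤ R.G := fun _ _ h => h.1

lemma dh_self (x : X) : R.dh x x = 0 := SimpleGraph.edist_self

lemma dh_comm (x y : X) : R.dh x y = R.dh y x := SimpleGraph.edist_comm

lemma dh_triangle (x y z : X) : R.dh x z ≤ R.dh x y + R.dh y z :=
  SimpleGraph.edist_triangle

lemma dh_adj {x y : X} (h : R.Gh.Adj x y) : R.dh x y ≤ 1 := by
  simpa [dh] using SimpleGraph.edist_le (SimpleGraph.Walk.cons h SimpleGraph.Walk.nil)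

lemma level_eq_of_gh_reachable {x y : X} (h : R.Gh.Reachable x y) :
    R.level x = R.level y := by
  obtain ⟨W⟩ := h
  induction W with
  | nil => rfl
  | cons h W ih => exact h.2.trans ih

lemma level_eq_of_dh_ne_top {x y : X} (h : R.dh x y ≠ ⊤) : R.level x = R.level y :=
  R.level_eq_of_gh_reachable (SimpleGraph.reachable_of_edist_ne_top h)

lemma dh_ne_top_of_le {x y : X} {n : ℕ} (h : R.dh x y ≤ (n : ℕ∞)) : R.dh x y ≠ ⊤ :=
  (h.trans_lt (ENat.coe_lt_top n)).ne

lemma gdist_le_of_dh_le {x y : X} {n : ℕ} (h : R.dh x y ≤ (n : ℕ∞)) :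
    R.G.dist x y ≤ n := by
  obtain ⟨W, hW⟩ :=
    (SimpleGraph.reachable_of_edist_ne_top (R.dh_ne_top_of_le h)).exists_walk_length_eq_edist
  have hlen : (W.length : ℕ∞) ≤ (n : ℕ∞) := le_of_eq_of_le hW h
  have hlen' : W.length ≤ n := by exact_mod_cast hlen
  calc R.G.dist x y ≤ (W.mapLe R.gh_le).length := SimpleGraph.dist_le _
    _ = W.length := by simp [SimpleGraph.Walk.length_map]
    _ ≤ n := hlen'

lemma edist_start_getVert {V : Type*} {H : SimpleGraph V} {u v : V} (W : H.Walk u v) :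
    ∀ s : ℕ, H.edist u (W.getVert s) ≤ (s : ℕ∞) := by
  induction W with
  | nil =>
    intro s
    rw [SimpleGraph.Walk.getVert_of_length_le _ (by simp)]
    simp [SimpleGraph.edist_self]
  | @cons a b c h W' ih =>
    intro s
    cases s with
    | zero => simp [SimpleGraph.edist_self]
    | succ s =>
      rw [SimpleGraph.Walk.getVert_cons_succ]
      have hab : H.edist a b ≤ 1 := by
        simpa using SimpleGraph.edist_le (SimpleGraph.Walk.cons h SimpleGraph.Walk.nil)
      calc H.edist a (W'.getVert s) ≤ H.edist a b + H.edist b (W'.getVert s) :=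
            SimpleGraph.edist_triangle
        _ ≤ 1 + (s : ℕ∞) := add_le_add hab (ih s)
        _ = ((s + 1 : ℕ) : ℕ∞) := by push_cast; ring

lemma edist_getVert_end {V : Type*} {H : SimpleGraph V} {u v : V} (W : H.Walk u v) :
    ∀ s : ℕ, H.edist (W.getVert s) v ≤ ((W.length - s : ℕ) : ℕ∞) := by
  induction W with
  | nil =>
    intro s
    rw [SimpleGraph.Walk.getVert_of_length_le _ (by simp)]
    simp [SimpleGraph.edist_self]
  | @cons a b c h W' ih =>
    intro s
    cases s with
    | zero =>
      have hab : H.edist a b ≤ 1 := by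
        simpa using SimpleGraph.edist_le (SimpleGraph.Walk.cons h SimpleGraph.Walk.nil)
      have h0 := ih 0
      simp only [SimpleGraph.Walk.getVert_zero, Nat.sub_zero] at h0 ⊢
      calc H.edist a c ≤ H.edist a b + H.edist b c := SimpleGraph.edist_triangle
        _ ≤ 1 + (W'.length : ℕ∞) := add_le_add hab h0
        _ = (((SimpleGraph.Walk.cons h W').length : ℕ) : ℕ∞) := by
            simp only [SimpleGraph.Walk.length_cons]; push_cast; ring
    | succ s =>
      rw [SimpleGraph.Walk.getVert_cons_succ]
      have := ih s
      have hl : (SimpleGraph.Walk.cons h W').length - (s+1) = W'.length - s := by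
        simp [SimpleGraph.Walk.length_cons]
      rw [hl]
      exact this

end RootedGraph

end Aux2
section Aux3

open SimpleGraph

namespace RootedGraph

variable {X : Type*} (R : RootedGraph X)

lemma dh_parents_le_one (hexp : R.Expansive) {w x y : X}
    (hx : w ∈ R.J 1 x) (hy : w ∈ R.J 1 y) : R.dh x y ≤ 1 := by
  by_contra hlt
  push_neg at hlt
  have hl : R.level x = R.level y := by have := hx.1; have := hy.1; omega
  have := hexp x y hl hlt w hx w hy
  rw [R.dh_self] at this
  simp at this

lemma dh_parents_le_aux (hexp : R.Expansive) :
    ∀ {u v : X} (W : R.Gh.Walk u v) (x y : X), u ∈ R.J 1 x → v ∈ R.J 1 y →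
      R.dh x y ≤ ((max 1 W.length : ℕ) : ℕ∞) := by
  intro u v W
  induction W with
  | nil =>
    intro x y hx hy
    simpa using R.dh_parents_le_one hexp hx hy
  | @cons a b c hadj W ih =>
    intro x y hx hy
    cases W with
    | nil =>
      by_contra hlt
      push_neg at hlt
      have h1lt : (1 : ℕ∞) < R.dh x y := by simpa using hlt
      have hlxy : R.level x = R.level y := by
        have := hx.1; have := hy.1; have := hadj.2; omega
      have := hexp x y hlxy h1lt a hx b hy
      exact absurd this (not_lt.2 (R.dh_adj hadj))
    | cons hadj2 W' =>
      have hlb : 1 ≤ R.level b := by have := hx.1; have := hadj.2; omega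
      obtain ⟨p₁, hp₁⟩ := R.exists_parent hlb
      have h1 : R.dh x p₁ ≤ 1 := by
        by_contra hlt
        push_neg at hlt
        have hlxp : R.level x = R.level p₁ := by
          have := hx.1; have := hp₁.1; have := hadj.2; omega
        have := hexp x p₁ hlxp hlt a hx b hp₁
        exact absurd this (not_lt.2 (R.dh_adj hadj))
      have h2 := ih p₁ y hp₁ hy
      have hmax : max 1 (SimpleGraph.Walk.cons hadj2 W').length = W'.length + 1 := by
        simp [SimpleGraph.Walk.length_cons]
      have hmax2 : max 1 (SimpleGraph.Walk.cons hadj (SimpleGraph.Walk.cons hadj2 W')).length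
          = W'.length + 2 := by
        simp [SimpleGraph.Walk.length_cons]
      rw [hmax] at h2
      rw [hmax2]
      calc R.dh x y ≤ R.dh x p₁ + R.dh p₁ y := R.dh_triangle x p₁ y
        _ ≤ 1 + ((W'.length + 1 : ℕ) : ℕ∞) := add_le_add h1 h2
        _ = ((W'.length + 2 : ℕ) : ℕ∞) := by push_cast; ring

lemma dh_parents_le (hexp : R.Expansive) {c : ℕ} (hc : 1 ≤ c) {u v x y : X}
    (h : R.dh u v ≤ (c : ℕ∞)) (hx : u ∈ R.J 1 x) (hy : v ∈ R.J 1 y) :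
    R.dh x y ≤ (c : ℕ∞) := by
  obtain ⟨W, hW⟩ :=
    (SimpleGraph.reachable_of_edist_ne_top (R.dh_ne_top_of_le h)).exists_walk_length_eq_edist
  have hlen : W.length ≤ c := by exact_mod_cast le_of_eq_of_le hW h
  have := R.dh_parents_le_aux hexp W x y hx hy
  calc R.dh x y ≤ ((max 1 W.length : ℕ) : ℕ∞) := this
    _ ≤ (c : ℕ∞) := by exact_mod_cast (by omega : max 1 W.length ≤ c)

lemma dh_anc_le (hexp : R.Expansive) {c : ℕ} (hc : 1 ≤ c) :
    ∀ {j : ℕ} {u v x y : X}, R.dh u v ≤ (c : ℕ∞) → R.Anc j x u → R.Anc j y v →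
      R.dh x y ≤ (c : ℕ∞) := by
  intro j
  induction j with
  | zero =>
    intro u v x y h hx hy
    cases hx; cases hy; exact h
  | succ j ih =>
    intro u v x y h hx hy
    cases hx with
    | step hxp hpu =>
      cases hy with
      | step hyq hqv =>
        exact ih (R.dh_parents_le hexp hc h hpu hqv) hxp hyq

lemma dh_two_anc_le_one (hexp : R.Expansive) {j : ℕ} {w x y : X}
    (hx : R.Anc j x w) (hy : R.Anc j y w) : R.dh x y ≤ 1 := by
  cases j with
  | zero => cases hx; cases hy; simp [R.dh_self]
  | succ j =>
    cases hx with
    | @step _ _ p _ hxp hpu =>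
      cases hy with
      | @step _ _ q _ hyq hqv =>
        have h1 : R.dh p q ≤ ((1:ℕ) : ℕ∞) := by
          exact_mod_cast R.dh_parents_le_one hexp hpu hqv
        have := R.dh_anc_le hexp (le_refl 1) h1 hxp hyq
        exact_mod_cast this

end RootedGraph

end Aux3
section Aux4

open SimpleGraph

namespace RootedGraph

variable {X : Type*} (R : RootedGraph X) {m k : ℕ}

lemma dh_anc_m_le (hdep : R.Departing m k) {u v x y : X}
    (hl : R.level u = R.level v) (h : R.dh u v ≤ ((2*k : ℕ) : ℕ∞))
    (hx : R.Anc m x u) (hy : R.Anc m y v) : R.dh x y ≤ (k : ℕ∞) := by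
  by_contra hlt
  push_neg at hlt
  have hlxy : R.level x = R.level y := by
    have := R.anc_level hx; have := R.anc_level hy; omega
  exact absurd (hdep x y hlxy hlt u (R.anc_mem_J hx) v (R.anc_mem_J hy)) (not_lt.2 h)

lemma claim2 (hexp : R.Expansive) (hdep : R.Departing m k) (hk : 0 < k) :
    ∀ Q : ℕ, 1 ≤ Q → ∀ {u v x y : X}, R.level u = R.level v →
      R.dh u v ≤ ((2*k*Q : ℕ) : ℕ∞) → R.Anc m x u → R.Anc m y v →
      R.dh x y ≤ ((k*Q : ℕ) : ℕ∞) := by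
  intro Q
  induction Q with
  | zero => omega
  | succ Q ih =>
    intro _ u v x y hl h hx hy
    by_cases h2k : R.dh u v ≤ ((2*k : ℕ) : ℕ∞)
    · have := R.dh_anc_m_le hdep hl h2k hx hy
      calc R.dh x y ≤ ((k:ℕ) : ℕ∞) := this
        _ ≤ ((k*(Q+1) : ℕ) : ℕ∞) := by
            have : k ≤ k*(Q+1) := Nat.le_mul_of_pos_right k (by omega)
            exact_mod_cast this
    · push_neg at h2k
      have hQ1 : 1 ≤ Q := by
        by_contra hQ
        have : Q = 0 := by omega
        subst this
        norm_num at h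
        exact absurd h (not_le.2 h2k)
      obtain ⟨W, hW⟩ :=
        (SimpleGraph.reachable_of_edist_ne_top (R.dh_ne_top_of_le h)).exists_walk_length_eq_edist
      have hlen : W.length ≤ 2*k*(Q+1) := by exact_mod_cast le_of_eq_of_le hW h
      set w := W.getVert (2*k) with hw
      have hdhuw : R.dh u w ≤ ((2*k : ℕ) : ℕ∞) := edist_start_getVert W (2*k)
      have hdhwv : R.dh w v ≤ ((2*k*Q : ℕ) : ℕ∞) := by
        have h1 := edist_getVert_end W (2*k)
        have h2 : W.length - 2*k ≤ 2*k*Q := by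
          have : 2*k*(Q+1) = 2*k*Q + 2*k := by ring
          omega
        calc R.dh w v ≤ ((W.length - 2*k : ℕ) : ℕ∞) := h1
          _ ≤ ((2*k*Q : ℕ) : ℕ∞) := by exact_mod_cast h2
      have hlw : R.level u = R.level w := R.level_eq_of_dh_ne_top (R.dh_ne_top_of_le hdhuw)
      have hmw : m ≤ R.level w := by
        have := R.anc_level hx; omega
      obtain ⟨z, hz⟩ := R.exists_anc m hmw
      have hxz : R.dh x z ≤ (k : ℕ∞) := R.dh_anc_m_le hdep hlw hdhuw hx hz
      have hzy : R.dh z y ≤ ((k*Q : ℕ) : ℕ∞) :=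
        ih hQ1 (hlw.symm.trans hl) hdhwv hz hy
      calc R.dh x y ≤ R.dh x z + R.dh z y := R.dh_triangle x z y
        _ ≤ (k : ℕ∞) + ((k*Q : ℕ) : ℕ∞) := add_le_add hxz hzy
        _ = ((k*(Q+1) : ℕ) : ℕ∞) := by push_cast; ring

lemma ray_level {f : ℕ → X} (hf : R.IsRay f) : ∀ i, R.level (f i) = i := by
  intro i
  induction i with
  | zero => rw [hf.1]; exact R.level_root
  | succ i ih => have := (hf.2 i).1; omega

lemma ray_anc {f : ℕ → X} (hf : R.IsRay f) (i : ℕ) : ∀ j, R.Anc j (f i) (f (i+j)) := by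
  intro j
  induction j with
  | zero => exact Anc.refl _
  | succ j ih => exact ih.step (hf.2 (i+j))

lemma growth (hexp : R.Expansive) (hdep : R.Departing m k) (hm : 0 < m) (hk : 0 < k)
    {f g : ℕ → X} (hf : R.IsRay f) (hg : R.IsRay g) (t : ℕ)
    (hgt : ∀ j, t < j → (k : ℕ∞) < R.dh (f j) (g j)) :
    ∀ (e lam : ℕ), t + 1 + e*m ≤ lam → ((k * 2^e : ℕ) : ℕ∞) < R.dh (f lam) (g lam) := by
  intro e
  induction e with
  | zero =>
    intro lam h
    rw [pow_zero, Nat.mul_one]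
    exact hgt lam (by omega)
  | succ e ih =>
    intro lam h
    have hmm : m ≤ (e+1)*m := Nat.le_mul_of_pos_left m (by omega)
    have hem : (e+1)*m = e*m + m := by ring
    have hmle : m ≤ lam := by omega
    have hmuge : t + 1 + e*m ≤ lam - m := by omega
    have hIH := ih (lam - m) hmuge
    by_contra hcon
    push_neg at hcon
    have h2 : R.dh (f lam) (g lam) ≤ ((2*k*(2^e) : ℕ) : ℕ∞) := by
      have heq : k*2^(e+1) = 2*k*2^e := by ring
      rw [← heq]
      exact hcon
    have hlamge : lam - m + m = lam := by omega
    have hancf : R.Anc m (f (lam - m)) (f lam) := by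
      have := R.ray_anc hf (lam - m) m
      rwa [hlamge] at this
    have hancg : R.Anc m (g (lam - m)) (g lam) := by
      have := R.ray_anc hg (lam - m) m
      rwa [hlamge] at this
    have hlvl : R.level (f lam) = R.level (g lam) := by
      rw [R.ray_level hf, R.ray_level hg]
    have := R.claim2 hexp hdep hk (2^e) (Nat.one_le_two_pow) hlvl h2 hancf hancg
    exact absurd this (not_le.2 hIH)

lemma sq_le_two_pow : ∀ j : ℕ, 4 ≤ j → j*j ≤ 2^j := by
  intro j hj
  induction j with
  | zero => omega
  | succ j ih =>
    rcases Nat.lt_or_ge j 4 with h4 | h4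
    · have : j = 3 := by omega
      subst this
      norm_num
    · have hih := ih (by omega)
      have h2 : 2*j+1 ≤ j*j := by
        calc 2*j+1 ≤ 3*j := by omega
          _ ≤ j*j := Nat.mul_le_mul_right j (by omega)
      calc (j+1)*(j+1) = j*j + (2*j+1) := by ring
        _ ≤ 2^j + 2^j := add_le_add hih (h2.trans hih)
        _ = 2^(j+1) := by ring

end RootedGraph

end Aux4
section Aux5

open SimpleGraph

namespace RootedGraph

variable {X : Type*} (R : RootedGraph X)

/-- Number of non-ascending steps of a walk. -/
noncomputable def notup : ∀ {u v : X}, R.G.Walk u v → ℕ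
  | _, _, SimpleGraph.Walk.nil => 0
  | _, _, @SimpleGraph.Walk.cons _ _ a b _ _ W =>
      (if R.level b = R.level a + 1 then 0 else 1) + notup W

@[simp] lemma notup_nil {u : X} : R.notup (SimpleGraph.Walk.nil : R.G.Walk u u) = 0 := rfl

lemma notup_cons {a b c : X} (h : R.G.Adj a b) (W : R.G.Walk b c) :
    R.notup (SimpleGraph.Walk.cons h W)
      = (if R.level b = R.level a + 1 then 0 else 1) + R.notup W := rfl

lemma notup_level_le : ∀ {u v : X} (W : R.G.Walk u v),
    R.notup W + R.level v ≤ W.length + R.level u := by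
  intro u v W
  induction W with
  | nil => simp [notup]
  | @cons a b c hadj W' ih =>
    by_cases hup : R.level b = R.level a + 1
    · have h1 : R.notup (SimpleGraph.Walk.cons hadj W') = R.notup W' := by
        simp [notup, hup]
      rw [h1, SimpleGraph.Walk.length_cons]
      omega
    · have h1 : R.notup (SimpleGraph.Walk.cons hadj W') = 1 + R.notup W' := by
        simp [notup, hup]
      have h2 : R.level b ≤ R.level a := by
        have := R.level_adj_le hadj; omega
      rw [h1, SimpleGraph.Walk.length_cons]
      omega

lemma dh_anc_walk (hexp : R.Expansive) {lam : ℕ} :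
    ∀ {p q : X} (W : R.G.Walk p q), (∀ w ∈ W.support, lam ≤ R.level w) →
    ∀ (jp jq : ℕ) (x y : X), R.level p = lam + jp → R.level q = lam + jq →
      R.Anc jp x p → R.Anc jq y q → R.dh x y ≤ (R.notup W : ℕ∞) + 1 := by
  intro p q W
  induction W with
  | nil =>
    intro hsup jp jq x y hp hq hx hy
    have hjj : jp = jq := by omega
    subst hjj
    have := R.dh_two_anc_le_one hexp hx hy
    calc R.dh x y ≤ 1 := this
      _ ≤ (R.notup (SimpleGraph.Walk.nil) : ℕ∞) + 1 := le_add_self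
  | @cons a b c hadj W' ih =>
    intro hsup jp jq x y hp hq hx hy
    have hsup' : ∀ w ∈ W'.support, lam ≤ R.level w := by
      intro w hw
      exact hsup w (by rw [SimpleGraph.Walk.support_cons]; exact List.mem_cons_of_mem _ hw)
    have hbsup : lam ≤ R.level b := hsup' b W'.start_mem_support
    by_cases hup : R.level b = R.level a + 1
    · have hbJ : b ∈ R.J 1 a := ⟨hup, SimpleGraph.dist_eq_one_iff_adj.mpr hadj⟩
      have hx' : R.Anc (jp+1) x b := hx.step hbJ
      have hnot : R.notup (SimpleGraph.Walk.cons hadj W') = R.notup W' := by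
        rw [R.notup_cons, if_pos hup]; omega
      rw [hnot]
      exact ih hsup' (jp+1) jq x y (by omega) hq hx' hy
    · have hble : R.level b ≤ R.level a := by
        have := R.level_adj_le hadj; omega
      have hlb : R.level b = lam + (R.level b - lam) := by omega
      obtain ⟨x₁, hx₁⟩ := R.exists_anc (R.level b - lam) (w := b) (by omega)
      have hxx₁ : R.dh x x₁ ≤ 1 := by
        rcases Nat.lt_or_ge (R.level b) (R.level a) with hlt | hge
        · have hla : R.level a = R.level b + 1 := by
            have := R.level_adj_le hadj.symm; omega
          have haJ : a ∈ R.J 1 b := ⟨by omega, SimpleGraph.dist_eq_one_iff_adj.mpr hadj.symm⟩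
          have hx₁' : R.Anc (R.level b - lam + 1) x₁ a := hx₁.step haJ
          have hjp : jp = R.level b - lam + 1 := by omega
          rw [hjp] at hx
          exact R.dh_two_anc_le_one hexp hx hx₁'
        · have hlab : R.level a = R.level b := by omega
          have hgh : R.Gh.Adj a b := ⟨hadj, hlab⟩
          have hjj : jp = R.level b - lam := by omega
          rw [hjj] at hx
          have hd1 : R.dh a b ≤ ((1:ℕ) : ℕ∞) := by exact_mod_cast R.dh_adj hgh
          have := R.dh_anc_le hexp (le_refl 1) hd1 hx hx₁
          exact_mod_cast this
      have hih := ih hsup' (R.level b - lam) jq x₁ y hlb hq hx₁ hy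
      have hnot : R.notup (SimpleGraph.Walk.cons hadj W') = 1 + R.notup W' := by
        rw [R.notup_cons, if_neg hup]
      calc R.dh x y ≤ R.dh x x₁ + R.dh x₁ y := R.dh_triangle x x₁ y
        _ ≤ 1 + ((R.notup W' : ℕ∞) + 1) := add_le_add hxx₁ hih
        _ = (R.notup (SimpleGraph.Walk.cons hadj W') : ℕ∞) + 1 := by
            rw [hnot]; push_cast; ring

end RootedGraph

end Aux5
section Aux6

open SimpleGraph

namespace RootedGraph

variable {X : Type*} (R : RootedGraph X) {m k : ℕ}

lemma main_est (hexp : R.Expansive) (hdep : R.Departing m k) (hm : 0 < m) (hk : 0 < k)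
    {f g : ℕ → X} (hf : R.IsRay f) (hg : R.IsRay g) (t : ℕ)
    (hgt : ∀ j, t < j → (k : ℕ∞) < R.dh (f j) (g j)) (i : ℕ) :
    2*i ≤ R.G.dist (f i) (g i) + 2*t + (2*((4*m+5)*m) + 6) := by
  classical
  set A := (4*m+5)*m with hA
  obtain ⟨W, hWlen⟩ := R.conn.exists_walk_length_eq_dist (f i) (g i)
  rw [← hWlen]
  obtain ⟨ws, hwsmem', hwsmin'⟩ :=
    W.support.toFinset.exists_min_image R.level ⟨f i, List.mem_toFinset.2 W.start_mem_support⟩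
  have hwsmem : ws ∈ W.support := List.mem_toFinset.1 hwsmem'
  have hwsmin : ∀ u ∈ W.support, R.level ws ≤ R.level u := fun u hu =>
    hwsmin' u (List.mem_toFinset.2 hu)
  have hsplit : (W.takeUntil ws hwsmem).length + (W.dropUntil ws hwsmem).length = W.length := by
    have h := congrArg SimpleGraph.Walk.length (W.take_spec hwsmem)
    rwa [SimpleGraph.Walk.length_append] at h
  set W₁ := W.takeUntil ws hwsmem with hW₁
  set W₂ := W.dropUntil ws hwsmem with hW₂
  have e₁ : R.notup W₁.reverse + i ≤ W₁.length + R.level ws := by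
    have h := R.notup_level_le W₁.reverse
    rw [SimpleGraph.Walk.length_reverse, R.ray_level hf i] at h
    exact h
  have e₂ : R.notup W₂ + i ≤ W₂.length + R.level ws := by
    have h := R.notup_level_le W₂
    rw [R.ray_level hg i] at h
    exact h
  by_cases hcase1 : R.level ws ≤ t + 1
  · omega
  · push_neg at hcase1
    set lam := R.level ws - 1 with hlam
    by_cases hcase2 : lam < t + A + 1
    · omega
    · push_neg at hcase2
      -- lower bound on dh (f lam) (g lam)
      set j := (lam - t - 1)/m with hj
      have hjml : j*m ≤ lam - t - 1 := Nat.div_mul_le_self _ _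
      have hjge : 4*m+5 ≤ j := by
        apply (Nat.le_div_iff_mul_le hm).2
        rw [← hA]
        omega
      have hjpos : 1 ≤ j := by omega
      have hlt : lam - t - 1 < j*m + m := by
        have h := (Nat.div_lt_iff_lt_mul hm).1 (Nat.lt_succ_self ((lam - t - 1)/m))
        have h2 : ((lam - t - 1)/m + 1)*m = j*m + m := by rw [← hj]; ring
        rw [h2] at h
        exact h
      have hstep : 2*(lam - t) ≤ 2*(j*m) + 2*m + 2 := by
        generalize j*m = P at hlt ⊢
        omega
      have hkey : 2*(j*m) + 2*m + 2 ≤ 2^j := by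
        have hjm_ge : m ≤ j*m := Nat.le_mul_of_pos_left m (by omega)
        have c1 : 2*(j*m) + 2*m + 2 ≤ 4*(j*m) + 5*j := by
          generalize j*m = P at hjm_ge ⊢
          omega
        have c2 : 4*(j*m) + 5*j = (4*m+5)*j := by ring
        have c3 : (4*m+5)*j ≤ j*j := Nat.mul_le_mul_right j hjge
        have c4 : j*j ≤ 2^j := sq_le_two_pow j (by omega)
        calc 2*(j*m) + 2*m + 2 ≤ 4*(j*m) + 5*j := c1
          _ = (4*m+5)*j := c2
          _ ≤ j*j := c3
          _ ≤ 2^j := c4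
      have hgrow := R.growth hexp hdep hm hk hf hg t hgt j lam
        (by generalize j*m = P at hjml; omega)
      have hφ : ((2*(lam - t) : ℕ) : ℕ∞) ≤ R.dh (f lam) (g lam) := by
        have h1 : 2*(lam - t) ≤ k * 2^j :=
          le_trans (hstep.trans hkey) (Nat.le_mul_of_pos_left _ hk)
        exact le_trans (by exact_mod_cast h1) (le_of_lt hgrow)
      -- upper bound on dh (f lam) (g lam)
      have hlam1 : R.level ws = lam + 1 := by omega
      obtain ⟨z, hz⟩ := R.exists_anc 1 (w := ws) (by omega)
      have hiL : R.level ws ≤ i := by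
        have h := hwsmin (f i) W.start_mem_support
        rwa [R.ray_level hf i] at h
      have hsup1 : ∀ w ∈ W₁.reverse.support, lam ≤ R.level w := by
        intro w hw
        rw [SimpleGraph.Walk.support_reverse, List.mem_reverse] at hw
        have := hwsmin w (SimpleGraph.Walk.support_takeUntil_subset W hwsmem hw)
        omega
      have hsup2 : ∀ w ∈ W₂.support, lam ≤ R.level w := by
        intro w hw
        have := hwsmin w (SimpleGraph.Walk.support_dropUntil_subset W hwsmem hw)
        omega
      have hancf : R.Anc (i - lam) (f lam) (f i) := by
        have h := R.ray_anc hf lam (i - lam)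
        rwa [show lam + (i - lam) = i by omega] at h
      have hancg : R.Anc (i - lam) (g lam) (g i) := by
        have h := R.ray_anc hg lam (i - lam)
        rwa [show lam + (i - lam) = i by omega] at h
      have hb1 : R.dh z (f lam) ≤ (R.notup W₁.reverse : ℕ∞) + 1 :=
        R.dh_anc_walk hexp W₁.reverse hsup1 1 (i - lam) z (f lam)
          (by omega) (by rw [R.ray_level hf i]; omega) hz hancf
      have hb2 : R.dh z (g lam) ≤ (R.notup W₂ : ℕ∞) + 1 :=
        R.dh_anc_walk hexp W₂ hsup2 1 (i - lam) z (g lam)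
          (by omega) (by rw [R.ray_level hg i]; omega) hz hancg
      have hupper : R.dh (f lam) (g lam)
          ≤ ((R.notup W₁.reverse + R.notup W₂ + 2 : ℕ) : ℕ∞) := by
        calc R.dh (f lam) (g lam) ≤ R.dh (f lam) z + R.dh z (g lam) := R.dh_triangle _ z _
          _ = R.dh z (f lam) + R.dh z (g lam) := by rw [R.dh_comm (f lam) z]
          _ ≤ ((R.notup W₁.reverse : ℕ∞) + 1) + ((R.notup W₂ : ℕ∞) + 1) := add_le_add hb1 hb2
          _ = ((R.notup W₁.reverse + R.notup W₂ + 2 : ℕ) : ℕ∞) := by push_cast; ring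
      have hnat : 2*(lam - t) ≤ R.notup W₁.reverse + R.notup W₂ + 2 := by
        exact_mod_cast le_trans hφ hupper
      omega

end RootedGraph

end Aux6
/-- Proposition 3.1: in an expansive `(m,k)`-departing rooted graph there
is `D₀ > 0` with `|(x|y) - |x ∨ y|_k| ≤ D₀` for all rays from the root; consequently two
rays are equivalent iff `d_h(x_i,y_i) ≤ k` for all `i`. -/
theorem gpRay_joinK_bound {X : Type*} (R : RootedGraph X) (m k : ℕ) (hm : 0 < m)
    (hk : 0 < k) (hexp : R.Expansive) (hdep : R.Departing m k) :
    ∃ D₀ : ℝ≥0∞, 0 < D₀ ∧ D₀ < ⊤ ∧ ∀ f g : ℕ → X, R.IsRay f → R.IsRay g →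
      (R.joinK k f g ≤ R.gpRay f g + D₀ ∧ R.gpRay f g ≤ R.joinK k f g + D₀) ∧
      (R.gpRay f g = ⊤ ↔ ∀ i, R.dh (f i) (g i) ≤ (k : ℕ∞)) := by
  classical
  set Creal : ℝ := (k : ℝ) + ((4*m+5)*m : ℕ) + 10 with hCreal
  have hCnn : (0:ℝ) ≤ Creal := by positivity
  refine ⟨ENNReal.ofReal Creal, ENNReal.ofReal_pos.2 (by positivity), ENNReal.ofReal_lt_top,
    ?_⟩
  intro f g hf hg
  have hgp_formula : ∀ i : ℕ, R.gp (f i) (g i)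
      = ((i : ℝ) + i - R.G.dist (f i) (g i)) / 2 := by
    intro i
    rw [RootedGraph.gp, R.ray_level hf i, R.ray_level hg i]
  by_cases hall : ∀ i, R.dh (f i) (g i) ≤ (k : ℕ∞)
  · -- all levels close: both quantities are ⊤
    have hgtop : R.gpRay f g = ⊤ := by
      by_contra hne
      obtain ⟨n, hn⟩ := ENNReal.exists_nat_gt hne
      have hub : (n : ℝ≥0∞) ≤ R.gpRay f g := by
        have hd : R.G.dist (f (n+k)) (g (n+k)) ≤ k := R.gdist_le_of_dh_le (hall (n+k))
        have hgpge : (n : ℝ) ≤ R.gp (f (n+k)) (g (n+k)) := by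
          rw [hgp_formula (n+k)]
          have : (R.G.dist (f (n+k)) (g (n+k)) : ℝ) ≤ (k:ℝ) := by exact_mod_cast hd
          push_cast
          linarith
        calc (n : ℝ≥0∞) = ENNReal.ofReal n := (ENNReal.ofReal_natCast n).symm
          _ ≤ ENNReal.ofReal (R.gp (f (n+k)) (g (n+k))) := ENNReal.ofReal_le_ofReal hgpge
          _ ≤ R.gpRay f g := le_iSup (fun i => ENNReal.ofReal (R.gp (f i) (g i))) (n+k)
      exact absurd hub (not_le.2 hn)
    have hjtop : R.joinK k f g = ⊤ := by
      by_contra hne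
      obtain ⟨n, hn⟩ := ENNReal.exists_nat_gt hne
      have hub : (n : ℝ≥0∞) ≤ R.joinK k f g :=
        le_iSup₂ (f := fun (i : ℕ) (_ : R.dh (f i) (g i) ≤ (k:ℕ∞)) => (i : ℝ≥0∞)) n (hall n)
      exact absurd hub (not_le.2 hn)
    refine ⟨⟨?_, ?_⟩, ?_⟩
    · rw [hgtop]; simp
    · rw [hjtop]; simp
    · simp [hgtop, hall]
  · push_neg at hall
    have hex : ∃ i, (k : ℕ∞) < R.dh (f i) (g i) := hall
    have hP0 : R.dh (f 0) (g 0) ≤ (k : ℕ∞) := by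
      rw [hf.1, hg.1, R.dh_self]
      exact zero_le
    set n₀ := Nat.find hex with hn₀
    have hn₀spec : (k : ℕ∞) < R.dh (f n₀) (g n₀) := Nat.find_spec hex
    have hn₀min : ∀ j < n₀, R.dh (f j) (g j) ≤ (k : ℕ∞) := fun j hj =>
      not_lt.1 (Nat.find_min hex hj)
    have hn₀pos : 1 ≤ n₀ := by
      by_contra h
      have h0 : n₀ = 0 := by omega
      rw [h0] at hn₀spec
      exact absurd hP0 (not_le.2 hn₀spec)
    set t := n₀ - 1 with ht
    have hPt : R.dh (f t) (g t) ≤ (k : ℕ∞) := hn₀min t (by omega)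
    have hgt : ∀ j, t < j → (k : ℕ∞) < R.dh (f j) (g j) := by
      have hstep : ∀ d : ℕ, (k : ℕ∞) < R.dh (f (n₀ + d)) (g (n₀ + d)) := by
        intro d
        induction d with
        | zero => simpa using hn₀spec
        | succ d ih =>
          by_contra hcon
          push_neg at hcon
          have := R.dh_parents_le hexp (c := k) (by omega) hcon (hf.2 (n₀+d)) (hg.2 (n₀+d))
          exact absurd this (not_le.2 ih)
      intro j hj
      have hj' : j = n₀ + (j - n₀) := by omega
      rw [hj']
      exact hstep _
    -- joinK = t
    have hjoin : R.joinK k f g = (t : ℝ≥0∞) := by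
      apply le_antisymm
      · refine iSup₂_le fun i hi => ?_
        have hit : i ≤ t := by
          by_contra h
          push_neg at h
          exact absurd hi (not_le.2 (hgt i h))
        exact_mod_cast hit
      · exact le_iSup₂ (f := fun (i : ℕ) (_ : R.dh (f i) (g i) ≤ (k:ℕ∞)) => (i : ℝ≥0∞)) t hPt
    -- upper estimate on gpRay
    have hest : ∀ i, R.gp (f i) (g i) ≤ (t : ℝ) + Creal := by
      intro i
      have h2 := R.main_est hexp hdep hm hk hf hg t hgt i
      rw [hgp_formula i]
      have h2' : (2*i : ℝ) ≤ (R.G.dist (f i) (g i) : ℝ) + 2*t + (2*(((4*m+5)*m : ℕ) : ℝ) + 6) := by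
        exact_mod_cast h2
      have hknn : (0:ℝ) ≤ (k:ℝ) := Nat.cast_nonneg k
      rw [hCreal]
      linarith
    have hgple : R.gpRay f g ≤ (t : ℝ≥0∞) + ENNReal.ofReal Creal := by
      refine iSup_le fun i => ?_
      calc ENNReal.ofReal (R.gp (f i) (g i)) ≤ ENNReal.ofReal ((t : ℝ) + Creal) :=
            ENNReal.ofReal_le_ofReal (hest i)
        _ = ENNReal.ofReal (t : ℝ) + ENNReal.ofReal Creal :=
            ENNReal.ofReal_add (by positivity) hCnn
        _ = (t : ℝ≥0∞) + ENNReal.ofReal Creal := by rw [ENNReal.ofReal_natCast]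
    have hlow : (t : ℝ≥0∞) ≤ R.gpRay f g + ENNReal.ofReal Creal := by
      have hdt : R.G.dist (f t) (g t) ≤ k := R.gdist_le_of_dh_le hPt
      have hgpt : (t : ℝ) - k ≤ R.gp (f t) (g t) := by
        rw [hgp_formula t]
        have : (R.G.dist (f t) (g t) : ℝ) ≤ (k:ℝ) := by exact_mod_cast hdt
        linarith
      calc (t : ℝ≥0∞) = ENNReal.ofReal (t : ℝ) := (ENNReal.ofReal_natCast t).symm
        _ ≤ ENNReal.ofReal (R.gp (f t) (g t) + Creal) := by
            apply ENNReal.ofReal_le_ofReal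
            have hkC : (k : ℝ) ≤ Creal := by
              rw [hCreal]
              have : (0:ℝ) ≤ (((4*m+5)*m : ℕ) : ℝ) := Nat.cast_nonneg _
              linarith
            linarith
        _ ≤ ENNReal.ofReal (R.gp (f t) (g t)) + ENNReal.ofReal Creal := ENNReal.ofReal_add_le
        _ ≤ R.gpRay f g + ENNReal.ofReal Creal := by
            exact add_le_add_left (le_iSup (fun i => ENNReal.ofReal (R.gp (f i) (g i))) t) _
    refine ⟨⟨by rw [hjoin]; exact hlow, by rw [hjoin]; exact hgple⟩, ?_⟩
    constructor
    · intro htop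
      rw [htop] at hgple
      have hfin : (t : ℝ≥0∞) + ENNReal.ofReal Creal < ⊤ :=
        ENNReal.add_lt_top.2 ⟨ENNReal.natCast_lt_top t, ENNReal.ofReal_lt_top⟩
      exact absurd hgple hfin.not_ge
    · intro hallk
      exact absurd (hallk n₀) (not_le.2 hn₀spec)
end
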